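/- Let d ≥ 1 and 1 ≤ k < n be integers and set λ := n/(n−k). Then for all s₁, …, s_d ≥ 1, with μ_ℓ(s) := 2(s−1)^ℓ/(s+1)^{ℓ+1} (convention 0^0 = 1), one has ∏_{α=1}^d Σ_{ℓ=0}^∞ √( μ_ℓ(s_α) · μ_ℓ(λ s_α) ) ≥ ( (n−k)/(n − k/2) )^{d/2}. In particular, for d = 1 and every s ≥ 1, Σ_ℓ √(μ_ℓ(s) μ_ℓ(λs)) ≥ √( 2/(λ+1) ), with equality at s = 1. -/

import Mathlib

/-- Eigenvalue sequence (in the Fock basis) of the single-mode thermal Gaussian state with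
covariance matrix `s·1₂`: `μ_ℓ(s) = 2(s-1)^ℓ/(s+1)^{ℓ+1}` (with `0^0 = 1`). -/
noncomputable def thermalEigenvalue (s : ℝ) (ℓ : ℕ) : ℝ :=
  2 * (s - 1) ^ ℓ / (s + 1) ^ (ℓ + 1)

lemma thermal_tsum (s t : ℝ) (hs : 1 ≤ s) (ht : 1 ≤ t) :
    ∑' ℓ : ℕ, Real.sqrt (thermalEigenvalue s ℓ * thermalEigenvalue t ℓ)
      = 2 / (Real.sqrt ((s + 1) * (t + 1)) - Real.sqrt ((s - 1) * (t - 1))) := by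
  set A := Real.sqrt ((s + 1) * (t + 1)) with hAdef
  set B := Real.sqrt ((s - 1) * (t - 1)) with hBdef
  have hApos : 0 < A := Real.sqrt_pos.mpr (by nlinarith)
  have hBnn : 0 ≤ B := Real.sqrt_nonneg _
  have hA2 : A ^ 2 = (s + 1) * (t + 1) := Real.sq_sqrt (by nlinarith)
  have hB2 : B ^ 2 = (s - 1) * (t - 1) := Real.sq_sqrt (by nlinarith)
  have hBA : B < A := by
    rw [hAdef, hBdef]
    exact Real.sqrt_lt_sqrt (by nlinarith) (by nlinarith)
  have hterm : ∀ ℓ : ℕ,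
      Real.sqrt (thermalEigenvalue s ℓ * thermalEigenvalue t ℓ)
        = (2 / A) * (B / A) ^ ℓ := by
    intro ℓ
    have hsq : thermalEigenvalue s ℓ * thermalEigenvalue t ℓ
        = ((2 / A) * (B / A) ^ ℓ) ^ 2 := by
      have h1 : ((2 / A) * (B / A) ^ ℓ) ^ 2
          = 4 * (B ^ 2) ^ ℓ / (A ^ 2) ^ (ℓ + 1) := by
        field_simp
        have hX : A ^ (ℓ * 2) * A⁻¹ ^ (ℓ * 2) = 1 := by
          rw [← mul_pow, mul_inv_cancel₀ hApos.ne', one_pow]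
        linear_combination (B ^ (ℓ * 2) * A ^ 2 * 4) * hX
      rw [h1, hA2, hB2]
      simp only [thermalEigenvalue]
      rw [mul_pow, mul_pow]
      have hs1 : (s + 1) ^ (ℓ + 1) ≠ 0 := by positivity
      have ht1 : (t + 1) ^ (ℓ + 1) ≠ 0 := by positivity
      field_simp
      ring
    rw [hsq, Real.sqrt_sq (by positivity)]
  simp_rw [hterm]
  rw [tsum_mul_left, tsum_geometric_of_lt_one (by positivity)
    ((div_lt_one hApos).mpr hBA)]
  have h1 : 1 - B / A = (A - B) / A := by field_simp
  rw [h1, inv_div]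
  have hAB : A - B ≠ 0 := by linarith
  field_simp

lemma thermal_lower (lam t : ℝ) (hlam : 1 ≤ lam) (ht : 1 ≤ t) :
    ∑' ℓ : ℕ, Real.sqrt (thermalEigenvalue t ℓ * thermalEigenvalue (lam * t) ℓ)
      ≥ Real.sqrt (2 / (lam + 1)) := by
  have hlt : 1 ≤ lam * t := by nlinarith
  rw [thermal_tsum t (lam * t) ht (by nlinarith)]
  set A := Real.sqrt ((t + 1) * (lam * t + 1)) with hAdef
  set B := Real.sqrt ((t - 1) * (lam * t - 1)) with hBdef
  have hBnn : 0 ≤ B := Real.sqrt_nonneg _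
  have hB2 : B ^ 2 = (t - 1) * (lam * t - 1) := Real.sq_sqrt (by nlinarith)
  have hBA : B < A := by
    rw [hAdef, hBdef]
    exact Real.sqrt_lt_sqrt (by nlinarith) (by nlinarith)
  have hC : (0:ℝ) < Real.sqrt (2 * (lam + 1)) := Real.sqrt_pos.mpr (by nlinarith)
  have hC2 : Real.sqrt (2 * (lam + 1)) ^ 2 = 2 * (lam + 1) :=
    Real.sq_sqrt (by nlinarith)
  -- key: A - B ≤ √(2(λ+1))
  have hkey : A - B ≤ Real.sqrt (2 * (lam + 1)) := by
    have hstep : (lam + 1) * (t - 1) ≤ Real.sqrt (2 * (lam + 1)) * B := by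
      have hnn : 0 ≤ (lam + 1) * (t - 1) := by nlinarith
      have hrhs : Real.sqrt (2 * (lam + 1)) * B
          = Real.sqrt (2 * (lam + 1) * ((t - 1) * (lam * t - 1))) := by
        rw [hBdef, ← Real.sqrt_mul (by nlinarith)]
      have hlhs : (lam + 1) * (t - 1)
          = Real.sqrt (((lam + 1) * (t - 1)) ^ 2) := (Real.sqrt_sq hnn).symm
      rw [hrhs, hlhs]
      apply Real.sqrt_le_sqrt
      nlinarith [mul_nonneg (mul_nonneg (by linarith : (0:ℝ) ≤ lam + 1)
        (by linarith : (0:ℝ) ≤ t - 1)) (mul_nonneg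
        (by linarith : (0:ℝ) ≤ lam - 1) (by linarith : (0:ℝ) ≤ t + 1))]
    have hA_le : A ≤ Real.sqrt (2 * (lam + 1)) + B := by
      have h2 : (t + 1) * (lam * t + 1) ≤ (Real.sqrt (2 * (lam + 1)) + B) ^ 2 := by
        have hexp : (Real.sqrt (2 * (lam + 1)) + B) ^ 2
            = 2 * (lam + 1) + 2 * (Real.sqrt (2 * (lam + 1)) * B) + B ^ 2 := by
          rw [add_sq, hC2]; ring
        rw [hexp, hB2]
        nlinarith
      calc A = Real.sqrt ((t + 1) * (lam * t + 1)) := hAdef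
        _ ≤ Real.sqrt ((Real.sqrt (2 * (lam + 1)) + B) ^ 2) := Real.sqrt_le_sqrt h2
        _ = Real.sqrt (2 * (lam + 1)) + B := Real.sqrt_sq (by positivity)
    linarith
  have hABpos : 0 < A - B := by linarith
  have hsqrt_eq : Real.sqrt (2 / (lam + 1)) = 2 / Real.sqrt (2 * (lam + 1)) := by
    rw [Real.sqrt_div (by norm_num) (lam + 1), Real.sqrt_mul (by norm_num) (lam + 1)]
    have h2 : Real.sqrt 2 * Real.sqrt 2 = 2 := Real.mul_self_sqrt (by norm_num)
    have hl : (0:ℝ) < Real.sqrt (lam + 1) := Real.sqrt_pos.mpr (by linarith)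
    have h2p : (0:ℝ) < Real.sqrt 2 := Real.sqrt_pos.mpr (by norm_num)
    field_simp
    nlinarith
  rw [ge_iff_le, hsqrt_eq]
  exact div_le_div_of_nonneg_left (by norm_num) hABpos hkey

theorem multimode_fidelity_de_finetti (d k n : ℕ) (hd : 1 ≤ d)
    (hk : 1 ≤ k) (hkn : k < n)
    (lam : ℝ) (hlam : lam = (n : ℝ) / ((n : ℝ) - k))
    (s : Fin d → ℝ) (hs : ∀ α, 1 ≤ s α) :
    (∏ α : Fin d, ∑' ℓ : ℕ,
        Real.sqrt (thermalEigenvalue (s α) ℓ * thermalEigenvalue (lam * s α) ℓ)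
      ≥ (((n : ℝ) - k) / ((n : ℝ) - (k : ℝ) / 2)) ^ ((d : ℝ) / 2))
    ∧ (∀ t : ℝ, 1 ≤ t →
        (∑' ℓ : ℕ, Real.sqrt (thermalEigenvalue t ℓ * thermalEigenvalue (lam * t) ℓ)
            ≥ Real.sqrt (2 / (lam + 1)))
        ∧ (t = 1 →
          ∑' ℓ : ℕ, Real.sqrt (thermalEigenvalue t ℓ * thermalEigenvalue (lam * t) ℓ)
            = Real.sqrt (2 / (lam + 1)))) := by
  have hnk : (0:ℝ) < (n : ℝ) - k := by
    have := hkn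
    push_cast
    have : (k:ℝ) < n := by exact_mod_cast hkn
    linarith
  have hlam1 : 1 ≤ lam := by
    rw [hlam, le_div_iff₀ hnk]
    have hk0 : (0:ℝ) < k := by exact_mod_cast hk
    linarith
  -- x := 2/(λ+1) equals (n-k)/(n-k/2)
  have hx_eq : 2 / (lam + 1) = ((n : ℝ) - k) / ((n : ℝ) - (k : ℝ) / 2) := by
    have h2 : (0:ℝ) < (n:ℝ) - (k:ℝ)/2 := by
      have hk0 : (0:ℝ) < k := by exact_mod_cast hk
      linarith
    have hl1 : lam + 1 ≠ 0 := by linarith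
    rw [div_eq_div_iff hl1 h2.ne', hlam]
    field_simp
    ring
  have hxpos : (0:ℝ) < ((n : ℝ) - k) / ((n : ℝ) - (k : ℝ) / 2) := by
    have h2 : (0:ℝ) < (n:ℝ) - (k:ℝ)/2 := by
      have hk0 : (0:ℝ) < k := by exact_mod_cast hk
      linarith
    positivity
  constructor
  · -- product part
    have hrpow : (((n : ℝ) - k) / ((n : ℝ) - (k : ℝ) / 2)) ^ ((d : ℝ) / 2)
        = Real.sqrt (2 / (lam + 1)) ^ d := by
      rw [hx_eq, Real.sqrt_eq_rpow, ← Real.rpow_natCast (_ ^ (1/(2:ℝ))) d,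
        ← Real.rpow_mul hxpos.le]
      congr 1
      push_cast
      ring
    rw [hrpow, ge_iff_le]
    calc Real.sqrt (2 / (lam + 1)) ^ d
        = ∏ _α : Fin d, Real.sqrt (2 / (lam + 1)) := by
          rw [Finset.prod_const, Finset.card_univ, Fintype.card_fin]
      _ ≤ ∏ α : Fin d, ∑' ℓ : ℕ,
            Real.sqrt (thermalEigenvalue (s α) ℓ * thermalEigenvalue (lam * s α) ℓ) := by
          apply Finset.prod_le_prod
          · intro i _; positivity
          · intro i _; exact thermal_lower lam (s i) hlam1 (hs i)
  · intro t ht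
    refine ⟨thermal_lower lam t hlam1 ht, ?_⟩
    rintro rfl
    rw [thermal_tsum 1 (lam * 1) le_rfl (by nlinarith)]
    have hB : Real.sqrt ((1 - 1) * (lam * 1 - 1)) = 0 := by norm_num
    have hA : Real.sqrt ((1 + 1) * (lam * 1 + 1)) = Real.sqrt (2 * (lam + 1)) := by
      norm_num
    rw [hA, hB, sub_zero]
    rw [Real.sqrt_div (by norm_num) (lam + 1), Real.sqrt_mul (by norm_num) (lam + 1)]
    have h2 : Real.sqrt 2 * Real.sqrt 2 = 2 := Real.mul_self_sqrt (by norm_num)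
    have hl : (0:ℝ) < Real.sqrt (lam + 1) := Real.sqrt_pos.mpr (by linarith)
    have h2p : (0:ℝ) < Real.sqrt 2 := Real.sqrt_pos.mpr (by norm_num)
    field_simp
    nlinarith
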